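/- For all real β > 0 and all real Δ > 0, one has ∫_ℝ (m⁺_{β,Δ}(x) − h_β(x)) dx = 2π·e^{−2πβΔ}/(1 − e^{−2πβΔ}) and ∫_ℝ (h_β(x) − m⁻_{β,Δ}(x)) dx = 2π·e^{−2πβΔ}/(1 + e^{−2πβΔ}). -/

import Mathlib

open scoped Real

noncomputable def poissonKernelH (β x : ℝ) : ℝ := β / (β ^ 2 + x ^ 2)

noncomputable def mPlus (β Δ x : ℝ) : ℝ :=
  (β / (β ^ 2 + x ^ 2)) *
    ((Real.exp (2 * π * β * Δ) + Real.exp (-(2 * π * β * Δ)) - 2 * Real.cos (2 * π * Δ * x)) /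
      (Real.exp (π * β * Δ) - Real.exp (-(π * β * Δ))) ^ 2)

noncomputable def mMinus (β Δ x : ℝ) : ℝ :=
  (β / (β ^ 2 + x ^ 2)) *
    ((Real.exp (2 * π * β * Δ) + Real.exp (-(2 * π * β * Δ)) - 2 * Real.cos (2 * π * Δ * x)) /
      (Real.exp (π * β * Δ) + Real.exp (-(π * β * Δ))) ^ 2)

open MeasureTheory Filter Set Topology Real
open scoped FourierTransform

lemma integral_cexp_Ioi (c : ℂ) (hc : c.re < 0) :
    ∫ x : ℝ in Ioi (0:ℝ), Complex.exp (c * x) = -c⁻¹ := by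
  have hc0 : c ≠ 0 := fun h => by simp [h] at hc
  have hderiv : ∀ x ∈ Ici (0:ℝ), HasDerivAt (fun x : ℝ => Complex.exp (c * x) / c)
      (Complex.exp (c * x)) x := by
    intro x _
    have h1 : HasDerivAt (fun x : ℝ => (x : ℂ)) 1 x := Complex.ofRealCLM.hasDerivAt
    have h2 : HasDerivAt (fun x : ℝ => c * (x : ℂ)) c x := by simpa using h1.const_mul c
    have h3 := (h2.cexp).div_const c
    rwa [mul_div_cancel_right₀ _ hc0] at h3
  have hint : IntegrableOn (fun x : ℝ => Complex.exp (c * x)) (Ioi 0) := by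
    have hb : (0:ℝ) < -c.re := by linarith
    have h := exp_neg_integrableOn_Ioi 0 hb
    refine Integrable.mono' (show IntegrableOn (fun x : ℝ => Real.exp (c.re * x)) (Ioi 0) volume by simpa using h) ?_ ?_
    · exact (Complex.continuous_exp.comp (by continuity)).aestronglyMeasurable
    · filter_upwards with x
      simp [Complex.norm_exp, Complex.mul_re, neg_mul]
  have htend : Tendsto (fun x : ℝ => Complex.exp (c * x) / c) atTop (𝓝 0) := by
    rw [tendsto_zero_iff_norm_tendsto_zero]
    have he : (fun x : ℝ => ‖Complex.exp (c * x) / c‖) = fun x => Real.exp (c.re * x) / ‖c‖ := by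
      ext x; simp [Complex.norm_exp, Complex.mul_re]
    rw [he]
    have h2 : Tendsto (fun x : ℝ => c.re * x) atTop atBot :=
      Tendsto.const_mul_atTop_of_neg hc tendsto_id
    simpa using (Real.tendsto_exp_atBot.comp h2).div_const ‖c‖
  have := integral_Ioi_of_hasDerivAt_of_tendsto' hderiv hint htend
  simpa [neg_div] using this

lemma integrable_exp_abs (a : ℝ) (ha : 0 < a) :
    Integrable (fun x : ℝ => Real.exp (-(a * |x|))) := by
  have hIoi : IntegrableOn (fun x : ℝ => Real.exp (-(a * |x|))) (Ioi 0) := by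
    refine ((exp_neg_integrableOn_Ioi 0 ha).congr_fun (fun x hx => ?_) measurableSet_Ioi)
    rw [abs_of_pos hx]; ring_nf
  have hIic : IntegrableOn (fun x : ℝ => Real.exp (-(a * |x|))) (Iic 0) := by
    rw [← Measure.map_neg_eq_self (volume : Measure ℝ)]
    have m : MeasurableEmbedding fun x : ℝ => -x := (Homeomorph.neg ℝ).measurableEmbedding
    rw [m.integrableOn_map_iff]
    simp_rw [Function.comp_def, abs_neg, neg_preimage, neg_Iic, neg_zero]
    exact (integrableOn_Ici_iff_integrableOn_Ioi' (by simp)).mpr hIoi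
  have h := hIic.union hIoi
  rwa [Iic_union_Ioi, integrableOn_univ] at h

lemma fourier_exp_abs (a : ℝ) (ha : 0 < a) (w : ℝ) :
    𝓕 (fun x : ℝ => (Real.exp (-(a * |x|)) : ℂ)) w
      = ((2 * a / (a^2 + (2*π*w)^2) : ℝ) : ℂ) := by
  rw [Real.fourier_real_eq_integral_exp_smul]
  set f : ℝ → ℂ := fun v => Complex.exp (↑(-2 * π * v * w) * Complex.I) • (Real.exp (-(a * |v|)) : ℂ) with hf
  have hfint : Integrable f := by
    apply Integrable.bdd_mul (c := 1) ((integrable_exp_abs a ha).ofReal)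
    · exact (Complex.continuous_exp.comp (by continuity)).aestronglyMeasurable
    · filter_upwards with v
      simp [Complex.norm_exp]
  have hsplit : (∫ v, f v) = (∫ v in Iic (0:ℝ), f v) + ∫ v in Ioi (0:ℝ), f v := by
    rw [← compl_Iic, integral_add_compl measurableSet_Iic hfint]
  have hc1 : ((-(a:ℂ)) - 2*π*w*Complex.I).re < 0 := by simp [ha]
  have hc2 : ((-(a:ℂ)) + 2*π*w*Complex.I).re < 0 := by simp [ha]
  have hIoi : (∫ v in Ioi (0:ℝ), f v) = -((-(a:ℂ)) - 2*π*w*Complex.I)⁻¹ := by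
    rw [← integral_cexp_Ioi _ hc1]
    apply setIntegral_congr_fun measurableSet_Ioi
    intro v hv
    have hav : |v| = v := abs_of_pos hv
    simp only [hf, smul_eq_mul, hav, Complex.ofReal_exp, ← Complex.exp_add]
    congr 1
    push_cast
    ring
  have hIic : (∫ v in Iic (0:ℝ), f v) = -((-(a:ℂ)) + 2*π*w*Complex.I)⁻¹ := by
    have h0 := integral_comp_neg_Iic (0:ℝ) (fun u => f (-u))
    simp only [neg_neg, neg_zero] at h0
    rw [h0, ← integral_cexp_Ioi _ hc2]
    apply setIntegral_congr_fun measurableSet_Ioi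
    intro v hv
    have hav : |(-v)| = v := by rw [abs_neg]; exact abs_of_pos hv
    simp only [hf, smul_eq_mul, hav, Complex.ofReal_exp, ← Complex.exp_add]
    congr 1
    push_cast
    ring
  rw [hsplit, hIoi, hIic]
  have h1 : ((a:ℂ) + 2*π*w*Complex.I) ≠ 0 := by
    intro h
    have := congrArg Complex.re h
    simp at this
    linarith
  have h2 : ((a:ℂ) - 2*π*w*Complex.I) ≠ 0 := by
    intro h
    have := congrArg Complex.re h
    simp at this
    linarith
  have e1 : -((-(a:ℂ)) - 2*π*w*Complex.I)⁻¹ = ((a:ℂ) + 2*π*w*Complex.I)⁻¹ := by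
    rw [← inv_neg]; ring_nf
  have e2 : -((-(a:ℂ)) + 2*π*w*Complex.I)⁻¹ = ((a:ℂ) - 2*π*w*Complex.I)⁻¹ := by
    rw [← inv_neg]; ring_nf
  rw [e2, e1]
  have hd : ((a:ℂ)^2 + (2*π*w)^2) ≠ 0 := by
    have hprod : ((a:ℂ) + 2*π*w*Complex.I) * ((a:ℂ) - 2*π*w*Complex.I) = (a:ℂ)^2 + (2*π*w)^2 := by
      ring_nf
      rw [Complex.I_sq]
      ring
    rw [← hprod]
    exact mul_ne_zero h1 h2
  push_cast
  rw [eq_div_iff hd]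
  field_simp
  ring_nf
  rw [Complex.I_sq]
  ring

lemma integrable_poisson (a : ℝ) (ha : 0 < a) :
    Integrable (fun x : ℝ => a / (a^2 + x^2)) := by
  have h1 : Integrable (fun x : ℝ => a⁻¹ * (1 + (a⁻¹ * x)^2)⁻¹) :=
    ((integrable_inv_one_add_sq.comp_mul_left' (inv_ne_zero ha.ne')).const_mul _)
  refine h1.congr (Filter.Eventually.of_forall fun x => ?_)
  have h2 : a^2 + x^2 > 0 := by positivity
  field_simp

lemma poisson_fourier (a : ℝ) (ha : 0 < a) (t : ℝ) :
    ∫ x : ℝ, Real.cos (t * x) * (a / (a^2 + x^2)) = π * Real.exp (-(a * |t|)) := by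
  set g : ℝ → ℂ := fun x => (Real.exp (-(a * |x|)) : ℂ) with hg
  have hg_cont : Continuous g := by
    exact Complex.continuous_ofReal.comp (Real.continuous_exp.comp (by continuity))
  have hg_int : Integrable g := (integrable_exp_abs a ha).ofReal
  have hF : 𝓕 g = fun w => ((2 * a / (a^2 + (2*π*w)^2) : ℝ) : ℂ) :=
    funext fun w => fourier_exp_abs a ha w
  have hF_int_real : Integrable (fun w : ℝ => 2 * a / (a^2 + (2*π*w)^2)) := by
    have h1 : Integrable (fun w : ℝ => a / (a^2 + (2*π*w)^2)) :=
      (integrable_poisson a ha).comp_mul_left' (by positivity : (2*π:ℝ) ≠ 0)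
    refine (h1.const_mul 2).congr (Filter.Eventually.of_forall fun w => ?_)
    ring
  have hF_int : Integrable (𝓕 g) := by
    rw [hF]; exact hF_int_real.ofReal
  have hinv := hg_cont.fourierInv_fourier_eq hg_int hF_int
  have hval : g t = ∫ w : ℝ, Complex.exp (↑(2 * π * w * t) * Complex.I)
      • ((2 * a / (a^2 + (2*π*w)^2) : ℝ) : ℂ) := by
    conv_lhs => rw [← hinv]
    rw [Real.fourierInv_eq_fourier_neg,
      Real.fourier_real_eq_integral_exp_smul]
    congr 1
    ext w
    rw [hF]
    norm_num
  have hint2 : Integrable (fun w : ℝ => Complex.exp (↑(2 * π * w * t) * Complex.I)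
      • ((2 * a / (a^2 + (2*π*w)^2) : ℝ) : ℂ)) := by
    apply Integrable.bdd_mul (c := 1) hF_int_real.ofReal
    · exact (Complex.continuous_exp.comp (by continuity)).aestronglyMeasurable
    · filter_upwards with v
      simp [Complex.norm_exp]
  have hre : Real.exp (-(a * |t|)) = ∫ w : ℝ, Real.cos (2 * π * w * t) * (2 * a / (a^2 + (2*π*w)^2)) := by
    have h7 : ∀ w : ℝ, (Complex.exp (↑(2 * π * w * t) * Complex.I)
        • ((2 * a / (a^2 + (2*π*w)^2) : ℝ) : ℂ)).re
        = Real.cos (2 * π * w * t) * (2 * a / (a^2 + (2*π*w)^2)) := by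
      intro w
      rw [smul_eq_mul, Complex.mul_re, Complex.ofReal_re, Complex.ofReal_im, mul_zero,
        sub_zero, Complex.exp_ofReal_mul_I_re]
    have h5 := congrArg Complex.re hval
    have h6 : (∫ w : ℝ, Complex.exp (↑(2 * π * w * t) * Complex.I)
        • ((2 * a / (a^2 + (2*π*w)^2) : ℝ) : ℂ)).re
        = ∫ w : ℝ, (Complex.exp (↑(2 * π * w * t) * Complex.I)
        • ((2 * a / (a^2 + (2*π*w)^2) : ℝ) : ℂ)).re := (integral_re hint2).symm
    rw [h6] at h5
    simp only [h7] at h5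
    simp only [hg, Complex.ofReal_re] at h5
    exact h5
  -- change of variables u = 2 π w
  have hcov := MeasureTheory.Measure.integral_comp_mul_left
    (fun u : ℝ => Real.cos (u * t) * (2 * a / (a^2 + u^2))) (2*π)
  have h2π : |(2*π)⁻¹| = (2*π)⁻¹ := abs_of_pos (by positivity)
  rw [h2π, smul_eq_mul] at hcov
  have heq : (fun w : ℝ => (fun u : ℝ => Real.cos (u * t) * (2 * a / (a^2 + u^2))) (2*π*w))
      = fun w : ℝ => Real.cos (2 * π * w * t) * (2 * a / (a^2 + (2*π*w)^2)) := by
    ext w; norm_num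
  rw [heq] at hcov
  rw [hcov] at hre
  have : (∫ u : ℝ, Real.cos (u * t) * (2 * a / (a^2 + u^2)))
      = 2 * ∫ x : ℝ, Real.cos (t * x) * (a / (a^2 + x^2)) := by
    rw [← integral_const_mul]
    congr 1; ext u; rw [mul_comm u t]; ring
  rw [this] at hre
  rw [inv_mul_eq_div, eq_div_iff (by positivity : (2*π:ℝ) ≠ 0)] at hre
  linarith [hre]

theorem L1_distances (β Δ : ℝ) (hβ : 0 < β) (hΔ : 0 < Δ) :
    (∫ x : ℝ, (mPlus β Δ x - poissonKernelH β x)) =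
      2 * π * Real.exp (-(2 * π * β * Δ)) / (1 - Real.exp (-(2 * π * β * Δ))) ∧
    (∫ x : ℝ, (poissonKernelH β x - mMinus β Δ x)) =
      2 * π * Real.exp (-(2 * π * β * Δ)) / (1 + Real.exp (-(2 * π * β * Δ))) := by
  set s : ℝ := Real.exp (π * β * Δ) with hs
  set s' : ℝ := Real.exp (-(π * β * Δ)) with hs'
  have hss : s * s' = 1 := by rw [hs, hs', ← Real.exp_add]; simp
  have hs1 : 1 < s := by
    have := Real.exp_lt_exp.mpr (show (0:ℝ) < π * β * Δ by positivity)
    simpa [hs] using this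
  have hs'pos : 0 < s' := Real.exp_pos _
  have hs'1 : s' < 1 := by nlinarith
  have h2 : Real.exp (2 * π * β * Δ) = s ^ 2 := by
    rw [hs, sq, ← Real.exp_add]; congr 1; ring
  have h2' : Real.exp (-(2 * π * β * Δ)) = s' ^ 2 := by
    rw [hs', sq, ← Real.exp_add]; congr 1; ring
  have hint_h : Integrable (poissonKernelH β) := by
    have := integrable_poisson β hβ
    exact this.congr (Filter.Eventually.of_forall fun x => rfl)
  have hint_ch : Integrable (fun x => Real.cos (2 * π * Δ * x) * poissonKernelH β x) := by
    apply Integrable.bdd_mul (c := 1) hint_h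
    · exact (Real.continuous_cos.comp (by continuity)).aestronglyMeasurable
    · filter_upwards with x
      simpa using Real.abs_cos_le_one _
  have hI1 : ∫ x : ℝ, poissonKernelH β x = π := by
    have := poisson_fourier β hβ 0
    simpa [poissonKernelH] using this
  have hI2 : ∫ x : ℝ, Real.cos (2 * π * Δ * x) * poissonKernelH β x = π * s' ^ 2 := by
    have h := poisson_fourier β hβ (2 * π * Δ)
    rw [abs_of_pos (by positivity)] at h
    rw [← h2']
    have harg : β * (2 * π * Δ) = 2 * π * β * Δ := by ring
    rw [harg] at h
    simpa [poissonKernelH] using h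
  have hq1 : 1 - s' ^ 2 ≠ 0 := by nlinarith
  constructor
  · set D : ℝ := (s - s') ^ 2 with hD
    have hDpos : 0 < D := by
      have : 0 < s - s' := by linarith
      positivity
    have hDne : D ≠ 0 := ne_of_gt hDpos
    have hfun : ∀ x, mPlus β Δ x - poissonKernelH β x
        = (2 / D) * poissonKernelH β x
          - (2 / D) * (Real.cos (2 * π * Δ * x) * poissonKernelH β x) := by
      intro x
      have key : (s ^ 2 + s' ^ 2 - 2 * Real.cos (2 * π * Δ * x)) / D - 1
          = (2 - 2 * Real.cos (2 * π * Δ * x)) / D := by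
        rw [div_sub_one hDne]
        congr 1
        rw [hD]
        linear_combination 2 * hss
      calc mPlus β Δ x - poissonKernelH β x
          = (β / (β ^ 2 + x ^ 2)) *
            ((s ^ 2 + s' ^ 2 - 2 * Real.cos (2 * π * Δ * x)) / D - 1) := by
            rw [mPlus, poissonKernelH, h2, h2', ← hs, ← hs', ← hD]; ring
        _ = (β / (β ^ 2 + x ^ 2)) * ((2 - 2 * Real.cos (2 * π * Δ * x)) / D) := by rw [key]
        _ = (2 / D) * poissonKernelH β x
            - (2 / D) * (Real.cos (2 * π * Δ * x) * poissonKernelH β x) := by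
            rw [poissonKernelH]; ring
    simp only [hfun]
    rw [integral_sub (hint_h.const_mul _) (hint_ch.const_mul _),
      integral_const_mul, integral_const_mul, hI1, hI2, h2']
    have hqD : s' ^ 2 * D = (1 - s' ^ 2) ^ 2 := by
      rw [hD]; linear_combination (s * s' + 1 - 2 * s' ^ 2) * hss
    rw [eq_div_iff hq1]
    field_simp
    linear_combination -hqD
  · set D : ℝ := (s + s') ^ 2 with hD
    have hDpos : 0 < D := by positivity
    have hDne : D ≠ 0 := ne_of_gt hDpos
    have hq1' : 1 + s' ^ 2 ≠ 0 := by positivity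
    have hfun : ∀ x, poissonKernelH β x - mMinus β Δ x
        = (2 / D) * poissonKernelH β x
          + (2 / D) * (Real.cos (2 * π * Δ * x) * poissonKernelH β x) := by
      intro x
      have key : 1 - (s ^ 2 + s' ^ 2 - 2 * Real.cos (2 * π * Δ * x)) / D
          = (2 + 2 * Real.cos (2 * π * Δ * x)) / D := by
        rw [one_sub_div hDne]
        congr 1
        rw [hD]
        linear_combination 2 * hss
      calc poissonKernelH β x - mMinus β Δ x
          = (β / (β ^ 2 + x ^ 2)) *
            (1 - (s ^ 2 + s' ^ 2 - 2 * Real.cos (2 * π * Δ * x)) / D) := by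
            rw [mMinus, poissonKernelH, h2, h2', ← hs, ← hs', ← hD]; ring
        _ = (β / (β ^ 2 + x ^ 2)) * ((2 + 2 * Real.cos (2 * π * Δ * x)) / D) := by rw [key]
        _ = (2 / D) * poissonKernelH β x
            + (2 / D) * (Real.cos (2 * π * Δ * x) * poissonKernelH β x) := by
            rw [poissonKernelH]; ring
    simp only [hfun]
    rw [integral_add (hint_h.const_mul _) (hint_ch.const_mul _),
      integral_const_mul, integral_const_mul, hI1, hI2, h2']
    have hqD : s' ^ 2 * D = (1 + s' ^ 2) ^ 2 := by
      rw [hD]; linear_combination (s * s' + 1 + 2 * s' ^ 2) * hss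
    rw [eq_div_iff hq1']
    field_simp
    linear_combination -hqD
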